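/- Let R be an associative ring, let A be a subring of R in which every left-normed commutator of m elements of A vanishes (i.e. A is Lie nilpotent of class < m), and let Z₀ be a subring of A with Z₀ ⊆ Z(R) (every element of Z₀ is central in R) and Z₀R ⊆ A. Then Z₀^m · R_m = 0, where Z₀^m is the additive span of m-fold products of elements of Z₀. -/

import Mathlib

/-- `I` is a right ideal of `R` (as an additive subgroup closed under right multiplication). -/
def IsRightIdealSG {R : Type*} [Ring R] (I : AddSubgroup R) : Prop :=
  ∀ i ∈ I, ∀ r : R, i * r ∈ I

/-- `I` is a left ideal of `R`. -/
def IsLeftIdealSG {R : Type*} [Ring R] (I : AddSubgroup R) : Prop :=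
  ∀ i ∈ I, ∀ r : R, r * i ∈ I

/-- `I` is a two-sided ideal of `R`. -/
def IsIdealSG {R : Type*} [Ring R] (I : AddSubgroup R) : Prop :=
  IsLeftIdealSG I ∧ IsRightIdealSG I

/-- Left-normed iterated commutator: `itComm s n = [[...[s 0, s 1],...], s n]`
(a left-normed commutator of `n + 1` elements). -/
def itComm {R : Type*} [Ring R] (s : ℕ → R) : ℕ → R
  | 0 => s 0
  | n + 1 => itComm s n * s (n + 1) - s (n + 1) * itComm s n

/-- `S` is Lie nilpotent of class ≤ m : every left-normed commutator of `m + 1`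
elements of `S` vanishes. -/
def LieNilpotentClassLe {R : Type*} [Ring R] (S : Set R) (m : ℕ) : Prop :=
  ∀ s : ℕ → R, (∀ n, s n ∈ S) → itComm s m = 0

/-- The Lie derived series of an additive subgroup `S` of a ring:
`D 0 = S`, `D (k+1)` = additive span of `[D k, D k]`. -/
def derSeries {R : Type*} [Ring R] (S : AddSubgroup R) : ℕ → AddSubgroup R
  | 0 => S
  | n + 1 => AddSubgroup.closure
      {x | ∃ a ∈ derSeries S n, ∃ b ∈ derSeries S n, x = a * b - b * a}

/-- `R^(−)_n`: the additive subgroup generated by all left-normed commutators of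
`n` elements of `R`. -/
def lcs (R : Type*) [Ring R] (n : ℕ) : AddSubgroup R :=
  AddSubgroup.closure {x | ∃ s : ℕ → R, x = itComm s (n - 1)}

/-- `R_n = R^(−)_n + R^(−)_n · R`, a two-sided ideal of `R`. -/
def Rn (R : Type*) [Ring R] (n : ℕ) : AddSubgroup R :=
  lcs R n ⊔ AddSubgroup.closure {x | ∃ c ∈ lcs R n, ∃ r : R, x = c * r}

/-- The additive span of `k`-fold products of elements of `S`. -/
def spanPow {R : Type*} [Ring R] (S : Set R) (k : ℕ) : AddSubgroup R :=
  AddSubgroup.closure {x | ∃ l : List R, l.length = k ∧ (∀ a ∈ l, a ∈ S) ∧ x = l.prod}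

/-- `J` is nilpotent: all `k`-fold products of its elements vanish for some `k > 0`. -/
def IsNilpotentSG {R : Type*} [Ring R] (J : AddSubgroup R) : Prop :=
  ∃ k : ℕ, 0 < k ∧ ∀ l : List R, l.length = k → (∀ a ∈ l, a ∈ J) → l.prod = 0

/-- `R` is semiprime: it has no nonzero nilpotent two-sided ideals. -/
def IsSemiprimeRing (R : Type*) [Ring R] : Prop :=
  ∀ J : AddSubgroup R, IsIdealSG J → IsNilpotentSG J → J = ⊥
lemma central_list_prod {R : Type*} [Ring R] (l : List R)
    (h : ∀ a ∈ l, ∀ r : R, a * r = r * a) : ∀ r : R, l.prod * r = r * l.prod := by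
  induction l with
  | nil => simp
  | cons a t ih =>
    intro r
    have ha := h a List.mem_cons_self
    have ih' := ih (fun b hb => h b (List.mem_cons_of_mem _ hb))
    calc (a :: t).prod * r = a * (t.prod * r) := by rw [List.prod_cons, mul_assoc]
      _ = a * (r * t.prod) := by rw [ih']
      _ = (a * r) * t.prod := by rw [mul_assoc]
      _ = (r * a) * t.prod := by rw [ha]
      _ = r * (a :: t).prod := by rw [List.prod_cons, mul_assoc]

lemma itComm_smul {R : Type*} [Ring R] (z s : ℕ → R)
    (hz : ∀ n, ∀ r : R, z n * r = r * z n) (k : ℕ) :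
    itComm (fun n => z n * s n) k = ((List.range (k+1)).map z).prod * itComm s k := by
  induction k with
  | zero => simp [itComm, List.range_succ]
  | succ k ih =>
    have hP : ∀ r : R, ((List.range (k+1)).map z).prod * r = r * ((List.range (k+1)).map z).prod := by
      refine central_list_prod _ ?_
      intro a ha r
      simp only [List.mem_map] at ha
      obtain ⟨i, _, rfl⟩ := ha
      exact hz i r
    have hrange : List.range (k+1+1) = List.range (k+1) ++ [k+1] := by
      rw [List.range_succ]
    rw [itComm, itComm, ih, hrange, List.map_append, List.prod_append]
    simp only [List.map_cons, List.map_nil, List.prod_cons, List.prod_nil, mul_one]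
    set P := ((List.range (k+1)).map z).prod with hPdef
    set c := itComm s k with hcdef
    have e1 : P * c * (z (k+1) * s (k+1)) = P * z (k+1) * (c * s (k+1)) := by
      calc P * c * (z (k+1) * s (k+1)) = P * (c * z (k+1)) * s (k+1) := by
            rw [mul_assoc, mul_assoc, mul_assoc]
        _ = P * (z (k+1) * c) * s (k+1) := by rw [← hz (k+1) c]
        _ = P * z (k+1) * (c * s (k+1)) := by rw [mul_assoc, mul_assoc, mul_assoc]
    have e2 : z (k+1) * s (k+1) * (P * c) = P * z (k+1) * (s (k+1) * c) := by
      calc z (k+1) * s (k+1) * (P * c) = z (k+1) * (s (k+1) * P) * c := by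
            rw [mul_assoc, mul_assoc, mul_assoc]
        _ = z (k+1) * (P * s (k+1)) * c := by rw [hP (s (k+1))]
        _ = (z (k+1) * P) * (s (k+1) * c) := by rw [mul_assoc, mul_assoc, mul_assoc]
        _ = (P * z (k+1)) * (s (k+1) * c) := by rw [hz (k+1) P]
    rw [e1, e2, mul_sub]

lemma list_prod_eq_getD {R : Type*} [Ring R] (l : List R) :
    ((List.range l.length).map (fun i => l.getD i 0)).prod = l.prod := by
  induction l with
  | nil => simp
  | cons a t ih =>
    have : List.range (a :: t).length = 0 :: (List.range t.length).map Nat.succ := by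
      simp [List.range_succ_eq_map]
    rw [this]
    simp only [List.map_cons, List.map_map, List.prod_cons]
    rw [show ((List.range t.length).map ((fun i => (a :: t).getD i 0) ∘ Nat.succ))
        = (List.range t.length).map (fun i => t.getD i 0) from by
      apply List.map_congr_left; intro i _; rfl]
    rw [ih]
    rfl

/-- **Lemma 2.** If `A` is a subring of `R` of Lie nilpotency class `< m` and
`Z₀` is a subring of `A` with `Z₀ ⊆ Z(R)` and `Z₀R ⊆ A`, then `Z₀^m · R_m = 0`. -/
theorem central_subring_power_annihilates {R : Type*} [Ring R] (m : ℕ) (hm : 1 ≤ m)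
    (A Z₀ : AddSubgroup R)
    (hAmul : ∀ a ∈ A, ∀ b ∈ A, a * b ∈ A)
    (hA : ∀ s : ℕ → R, (∀ n, s n ∈ A) → itComm s (m - 1) = 0)
    (hZmul : ∀ a ∈ Z₀, ∀ b ∈ Z₀, a * b ∈ Z₀)
    (hZA : Z₀ ≤ A)
    (hZcent : ∀ z ∈ Z₀, ∀ r : R, z * r = r * z)
    (hZR : ∀ z ∈ Z₀, ∀ r : R, z * r ∈ A) :
    ∀ x ∈ spanPow (Z₀ : Set R) m, ∀ y ∈ Rn R m, x * y = 0 := by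
  have key : ∀ l : List R, l.length = m → (∀ a ∈ l, a ∈ Z₀) → ∀ s : ℕ → R,
      l.prod * itComm s (m-1) = 0 := by
    intro l hl hlZ s
    set z : ℕ → R := fun i => l.getD i 0 with hzdef
    have hzZ : ∀ n, z n ∈ Z₀ := by
      intro n
      by_cases h : n < l.length
      · have : z n = l[n] := List.getD_eq_getElem l 0 h
        rw [this]; exact hlZ _ (List.getElem_mem h)
      · have : z n = 0 := List.getD_eq_default l 0 (le_of_not_gt h)
        rw [this]; exact Z₀.zero_mem
    have hzc : ∀ n, ∀ r : R, z n * r = r * z n := fun n r => hZcent _ (hzZ n) r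
    have h0 : itComm (fun n => z n * s n) (m-1) = 0 :=
      hA _ (fun n => hZR _ (hzZ n) (s n))
    rw [itComm_smul z s hzc (m-1)] at h0
    have hm1 : m - 1 + 1 = m := Nat.succ_pred_eq_of_pos hm
    rw [hm1] at h0
    calc l.prod * itComm s (m-1)
        = ((List.range l.length).map (fun i => l.getD i 0)).prod * itComm s (m-1) := by
          rw [list_prod_eq_getD]
      _ = 0 := by rw [hl]; exact h0
  have main : ∀ l : List R, l.length = m → (∀ a ∈ l, a ∈ Z₀) →
      ∀ y ∈ Rn R m, l.prod * y = 0 := by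
    intro l hl hlZ
    let K : AddSubgroup R :=
      { carrier := {r : R | l.prod * r = 0}
        zero_mem' := by simp
        add_mem' := by
          intro a b ha hb
          simp only [Set.mem_setOf_eq] at *
          rw [mul_add, ha, hb, add_zero]
        neg_mem' := by
          intro a ha
          simp only [Set.mem_setOf_eq] at *
          rw [mul_neg, ha, neg_zero] }
    have h1 : lcs R m ≤ K := by
      rw [lcs, AddSubgroup.closure_le]
      rintro x ⟨s, rfl⟩
      exact key l hl hlZ s
    have h2 : Rn R m ≤ K := by
      rw [Rn]
      refine sup_le h1 ?_
      rw [AddSubgroup.closure_le]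
      rintro x ⟨c, hc, r, rfl⟩
      have hc0 : l.prod * c = 0 := h1 hc
      show l.prod * (c * r) = 0
      rw [← mul_assoc, hc0, zero_mul]
    intro y hy
    exact h2 hy
  intro x hx y hy
  let K2 : AddSubgroup R :=
    { carrier := {x : R | x * y = 0}
      zero_mem' := by simp
      add_mem' := by
        intro a b ha hb
        simp only [Set.mem_setOf_eq] at *
        rw [add_mul, ha, hb, add_zero]
      neg_mem' := by
        intro a ha
        simp only [Set.mem_setOf_eq] at *
        rw [neg_mul, ha, neg_zero] }
  have : spanPow (Z₀ : Set R) m ≤ K2 := by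
    rw [spanPow, AddSubgroup.closure_le]
    rintro x0 ⟨l, hl, hlZ, rfl⟩
    exact main l hl hlZ y hy
  exact this hx
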